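/- Let ξ_k = ±1 satisfy ‖∑_{k=0}^{2n−1} ξ_k e^{ikt}‖_∞ ≤ 5√(2n), let ψ: ℕ → (0,∞), β ∈ ℝ, and define f₂(t) = (10√(2n)+2)^{−1} ∑_{k=−(2n−1)}^{2n−1} ξ_{|k|} ψ(|k|) e^{ikt} (with ψ(0):=ψ(1)). Then the (ψ,β)-derivative of f₂ satisfies ‖(f₂)^ψ_β‖_∞ ≤ 1, i.e., f₂ ∈ L^ψ_{β,∞}. -/

import Mathlib

open MeasureTheory Real Complex Finset

/-- The `k`-th Fourier coefficient of a `2π`-periodic function. -/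
noncomputable def fourierCoef (f : ℝ → ℂ) (k : ℤ) : ℂ :=
  (1 / (2 * π)) * ∫ t in (-π)..π, f t * Complex.exp (-Complex.I * k * t)

/-- Membership in the class `L^ψ_{β,∞}`. -/
def LpsiClass (ψ : ℕ → ℝ) (β : ℝ) (f : ℝ → ℝ) : Prop :=
  (∀ t, f (t + 2 * π) = f t) ∧ IntervalIntegrable f volume (-π) π ∧
  ∃ g : ℝ → ℝ, (∀ t, g (t + 2 * π) = g t) ∧ IntervalIntegrable g volume (-π) π ∧
    (∀ᵐ t : ℝ, |g t| ≤ 1) ∧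
    fourierCoef (fun t => (g t : ℂ)) 0 = 0 ∧
    ∀ k : ℤ, k ≠ 0 →
      fourierCoef (fun t => (g t : ℂ)) k
        = (fourierCoef (fun t => (f t : ℂ)) k / (ψ k.natAbs : ℂ)) *
            Complex.exp (Complex.I * (β * π / 2) * (k.sign : ℤ))

lemma expInt_integral (j : ℤ) :
    (∫ t in (-π:ℝ)..π, Complex.exp (Complex.I * j * t)) =
      if j = 0 then (2*π : ℂ) else 0 := by
  by_cases hj : j = 0
  · simp [hj, two_mul]
  · rw [if_neg hj]
    have hc : (Complex.I * (j:ℂ)) ≠ 0 := by simp [Complex.I_ne_zero, hj]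
    rw [integral_exp_mul_complex hc]
    have h1 : Complex.exp (Complex.I * (j:ℂ) * (π:ℂ)) =
        Complex.exp (Complex.I * (j:ℂ) * ((-π:ℝ):ℂ)) := by
      rw [show Complex.I*(j:ℂ)*(π:ℂ) = Complex.I*j*((-π:ℝ):ℂ) + (j:ℤ)*(2*π*Complex.I) by
        push_cast; ring, Complex.exp_add, Complex.exp_int_mul_two_pi_mul_I, mul_one]
    rw [h1]; simp

lemma expInt_periodic (k : ℤ) (t : ℝ) :
    Complex.exp (Complex.I * k * ((t + 2*π : ℝ):ℂ)) = Complex.exp (Complex.I * k * t) := by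
  rw [show Complex.I * (k:ℂ) * ((t + 2*π : ℝ):ℂ)
      = Complex.I * k * (t:ℂ) + (k:ℤ) * (2*π*Complex.I) by push_cast; ring,
    Complex.exp_add, Complex.exp_int_mul_two_pi_mul_I, mul_one]

lemma conj_exp_int (k : ℤ) (t : ℝ) :
    (starRingEnd ℂ) (Complex.exp (Complex.I * k * t))
      = Complex.exp (Complex.I * ((-k : ℤ):ℂ) * t) := by
  rw [← Complex.exp_conj]
  congr 1
  simp [map_mul, Complex.conj_I, Complex.conj_ofReal]

lemma fourierCoef_sum (s : Finset ℤ) (a : ℤ → ℂ) (k : ℤ) :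
    fourierCoef (fun t => ∑ m ∈ s, a m * Complex.exp (Complex.I * m * t)) k
      = if k ∈ s then a k else 0 := by
  unfold fourierCoef
  have h1 : ∀ t : ℝ, (∑ m ∈ s, a m * Complex.exp (Complex.I * m * t)) *
      Complex.exp (-Complex.I * k * t)
      = ∑ m ∈ s, a m * Complex.exp (Complex.I * ((m - k : ℤ):ℂ) * t) := by
    intro t
    rw [Finset.sum_mul]
    refine Finset.sum_congr rfl fun m _ => ?_
    rw [mul_assoc, ← Complex.exp_add]
    congr 2
    push_cast
    ring
  simp only [h1]
  rw [intervalIntegral.integral_finset_sum]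
  · simp only [intervalIntegral.integral_const_mul, expInt_integral, sub_eq_zero]
    rw [show (∑ m ∈ s, a m * if m = k then (2*π:ℂ) else 0)
        = ∑ m ∈ s, (if m = k then a m * (2*π:ℂ) else 0) by
      exact Finset.sum_congr rfl fun m _ => by split <;> simp]
    rw [Finset.sum_ite_eq' s k]
    have hπ : (π:ℂ) ≠ 0 := by exact_mod_cast Real.pi_ne_zero
    split
    · field_simp
    · simp
  · intro m _
    apply Continuous.intervalIntegrable
    fun_prop

lemma symmSum_real (s : Finset ℤ) (hs : ∀ k ∈ s, -k ∈ s) (a : ℤ → ℂ)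
    (ha : ∀ k, (starRingEnd ℂ) (a k) = a (-k)) (t : ℝ) :
    (((∑ k ∈ s, a k * Complex.exp (Complex.I * k * t)).re : ℝ) : ℂ)
      = ∑ k ∈ s, a k * Complex.exp (Complex.I * k * t) := by
  rw [← Complex.conj_eq_iff_re, map_sum]
  refine Finset.sum_nbij' (i := fun k => -k) (j := fun k => -k)
    (fun k hk => hs k hk) (fun k hk => hs k hk) (fun k _ => neg_neg k)
    (fun k _ => neg_neg k) ?_
  intro k _
  rw [map_mul, ha, conj_exp_int]


/-- The Rudin–Shapiro test function
`f₂(t) = (10√(2n)+2)⁻¹ ∑_{|k| ≤ 2n-1} ξ_{|k|} ψ(|k|) e^{ikt}` belongs to `L^ψ_{β,∞}`. -/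
theorem f2_in_class (n : ℕ) (hn : 1 ≤ n) (ξ : ℕ → ℝ)
    (hξ : ∀ k, ξ k = 1 ∨ ξ k = -1)
    (hRS : ∀ t : ℝ,
      ‖∑ k ∈ Finset.range (2 * n), (ξ k : ℂ) * Complex.exp (Complex.I * k * t)‖
        ≤ 5 * Real.sqrt (2 * n))
    (ψ : ℕ → ℝ) (hψ : ∀ k, 0 < ψ k) (hψ0 : ψ 0 = ψ 1) (β : ℝ) :
    LpsiClass ψ β (fun t : ℝ =>
      ((1 / (10 * Real.sqrt (2 * n) + 2) : ℝ) *
        ∑ k ∈ Finset.Icc (-(2 * (n : ℤ) - 1)) (2 * (n : ℤ) - 1),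
          (ξ k.natAbs : ℂ) * (ψ k.natAbs : ℂ) * Complex.exp (Complex.I * k * t)).re) := by
  have hn' : (1:ℤ) ≤ (n:ℤ) := by exact_mod_cast hn
  set q : ℝ := Real.sqrt (2 * n) with hq
  have hq0 : 0 ≤ q := Real.sqrt_nonneg _
  have hden : (0:ℝ) < 10 * q + 2 := by positivity
  set c : ℝ := 1 / (10 * q + 2) with hcdef
  have hc0 : 0 < c := by positivity
  set S : Finset ℤ := Finset.Icc (-(2 * (n : ℤ) - 1)) (2 * (n : ℤ) - 1) with hSdef
  have hSneg : ∀ k ∈ S, -k ∈ S := by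
    intro k hk
    simp only [hSdef, Finset.mem_Icc] at *
    omega
  set s0 : Finset ℤ := S.erase 0 with hs0def
  have hs0neg : ∀ k ∈ s0, -k ∈ s0 := by
    intro k hk
    simp only [hs0def, hSdef, Finset.mem_erase, Finset.mem_Icc] at *
    omega
  -- coefficient functions
  set a : ℤ → ℂ := fun m => (c:ℂ) * ((ξ m.natAbs : ℂ) * (ψ m.natAbs : ℂ)) with hadef
  set e : ℤ → ℂ := fun m =>
    Complex.exp (Complex.I * (β * π / 2) * (m.sign : ℤ)) with hedef
  set b : ℤ → ℂ := fun m => (c:ℂ) * (ξ m.natAbs : ℂ) * e m with hbdef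
  have hconj_a : ∀ k, (starRingEnd ℂ) (a k) = a (-k) := by
    intro k
    simp [hadef, map_mul, Complex.conj_ofReal, Int.natAbs_neg]
  have hconj_e : ∀ k : ℤ, (starRingEnd ℂ) (e k) = e (-k) := by
    intro k
    simp only [hedef]
    rw [← Complex.exp_conj]
    congr 1
    simp only [map_mul, map_div₀, Complex.conj_I, Complex.conj_ofReal, map_intCast,
      map_ofNat, Int.sign_neg]
    push_cast
    ring
  have hconj_b : ∀ k, (starRingEnd ℂ) (b k) = b (-k) := by
    intro k
    simp only [hbdef, map_mul, Complex.conj_ofReal, Int.natAbs_neg, hconj_e]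
  -- the candidate g
  set g : ℝ → ℝ := fun t =>
    (∑ k ∈ s0, b k * Complex.exp (Complex.I * k * t)).re with hgdef
  -- Fourier coefficients
  have hfc : ∀ k : ℤ,
      fourierCoef (fun t : ℝ =>
        ((((c : ℂ) * ∑ k ∈ S, (ξ k.natAbs : ℂ) * (ψ k.natAbs : ℂ) *
          Complex.exp (Complex.I * k * t)).re : ℝ) : ℂ)) k
        = if k ∈ S then a k else 0 := by
    intro k
    have hfun : (fun t : ℝ =>
        ((((c : ℂ) * ∑ k ∈ S, (ξ k.natAbs : ℂ) * (ψ k.natAbs : ℂ) *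
          Complex.exp (Complex.I * k * t)).re : ℝ) : ℂ))
        = fun t : ℝ => ∑ m ∈ S, a m * Complex.exp (Complex.I * m * t) := by
      funext t
      have h2 : (c:ℂ) * (∑ k ∈ S, (ξ k.natAbs : ℂ) * (ψ k.natAbs : ℂ) *
          Complex.exp (Complex.I * k * t))
          = ∑ m ∈ S, a m * Complex.exp (Complex.I * m * t) := by
        rw [Finset.mul_sum]
        exact Finset.sum_congr rfl fun m _ => by rw [hadef]; ring
      rw [h2, symmSum_real S hSneg a hconj_a t]
    rw [hfun, fourierCoef_sum]
  have hgc : ∀ k : ℤ,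
      fourierCoef (fun t => ((g t : ℝ) : ℂ)) k = if k ∈ s0 then b k else 0 := by
    intro k
    have hfun : (fun t : ℝ => ((g t : ℝ) : ℂ))
        = fun t : ℝ => ∑ m ∈ s0, b m * Complex.exp (Complex.I * m * t) := by
      funext t
      rw [hgdef]
      exact symmSum_real s0 hs0neg b hconj_b t
    rw [hfun, fourierCoef_sum]
  -- split of s0 into positive and negative parts
  set Pos : Finset ℤ := Finset.Icc (1:ℤ) (2*(n:ℤ)-1) with hPdef
  set Neg : Finset ℤ := Finset.Icc (-(2*(n:ℤ)-1)) (-1) with hNdef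
  have hsplit : s0 = Pos ∪ Neg := by
    ext k
    simp only [hs0def, hSdef, hPdef, hNdef, Finset.mem_erase, Finset.mem_Icc,
      Finset.mem_union]
    omega
  have hdisj : Disjoint Pos Neg := by
    rw [Finset.disjoint_left]
    intro k h1 h2
    simp only [hPdef, hNdef, Finset.mem_Icc] at h1 h2
    omega
  have hw : ‖e 1‖ = 1 := by
    simp [hedef, Complex.norm_exp]
  have hξnorm : ∀ m : ℕ, ‖(ξ m : ℂ)‖ = 1 := by
    intro m
    rcases hξ m with h | h <;> simp [h]
  have hTbound : ∀ t : ℝ,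
      ‖∑ k ∈ Pos, (ξ k.natAbs : ℂ) * Complex.exp (Complex.I * k * t)‖ ≤ 5*q + 1 := by
    intro t
    have h0 : (0:ℕ) ∈ Finset.range (2*n) := by simp; omega
    have hsum : (∑ k ∈ Finset.range (2*n), (ξ k : ℂ) * Complex.exp (Complex.I * k * t))
        = (ξ 0 : ℂ) + ∑ k ∈ (Finset.range (2*n)).erase 0,
            (ξ k : ℂ) * Complex.exp (Complex.I * k * t) := by
      rw [← Finset.add_sum_erase _ _ h0]
      norm_num
    have hre : (∑ k ∈ Pos, (ξ k.natAbs : ℂ) * Complex.exp (Complex.I * k * t))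
        = ∑ k ∈ (Finset.range (2*n)).erase 0,
            (ξ k : ℂ) * Complex.exp (Complex.I * k * t) := by
      refine Finset.sum_nbij' (i := fun k : ℤ => k.natAbs) (j := fun k : ℕ => (k:ℤ))
        ?_ ?_ ?_ ?_ ?_
      · intro k hk
        simp only [hPdef, Finset.mem_Icc] at hk
        simp only [Finset.mem_erase, Finset.mem_range]
        omega
      · intro k hk
        simp only [Finset.mem_erase, Finset.mem_range] at hk
        simp only [hPdef, Finset.mem_Icc]
        omega
      · intro k hk
        simp only [hPdef, Finset.mem_Icc] at hk
        show ((k.natAbs : ℕ) : ℤ) = k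
        omega
      · intro k hk
        simp
      · intro k hk
        simp only [hPdef, Finset.mem_Icc] at hk
        have hcast : ((k.natAbs : ℕ) : ℂ) = (k:ℂ) := by
          rw [← Int.cast_natCast (R := ℂ), Int.natAbs_of_nonneg (by omega : (0:ℤ) ≤ k)]
        rw [hcast]
    rw [hre]
    calc ‖∑ k ∈ (Finset.range (2*n)).erase 0, (ξ k : ℂ) * Complex.exp (Complex.I * k * t)‖
        = ‖(∑ k ∈ Finset.range (2*n), (ξ k : ℂ) * Complex.exp (Complex.I * k * t))
            - (ξ 0:ℂ)‖ := by rw [hsum]; congr 1; ring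
      _ ≤ ‖∑ k ∈ Finset.range (2*n), (ξ k : ℂ) * Complex.exp (Complex.I * k * t)‖
            + ‖(ξ 0:ℂ)‖ := norm_sub_le _ _
      _ ≤ 5*q + 1 := by rw [hξnorm 0]; linarith [hRS t]
  have hPt : ∀ t : ℝ, (∑ k ∈ Pos, b k * Complex.exp (Complex.I * k * t))
      = ((c:ℂ) * e 1) * ∑ k ∈ Pos, (ξ k.natAbs : ℂ) * Complex.exp (Complex.I * k * t) := by
    intro t
    rw [Finset.mul_sum]
    refine Finset.sum_congr rfl fun k hk => ?_
    have hk1 : (0:ℤ) < k := by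
      simp only [hPdef, Finset.mem_Icc] at hk
      omega
    have he1 : e k = e 1 := by
      simp only [hedef, Int.sign_eq_one_of_pos hk1]
      norm_num
    rw [hbdef]
    simp only
    rw [he1]
    ring
  have hgbound : ∀ t : ℝ, |g t| ≤ 1 := by
    intro t
    have hGsplit : (∑ k ∈ s0, b k * Complex.exp (Complex.I * k * t))
        = (∑ k ∈ Pos, b k * Complex.exp (Complex.I * k * t))
          + (starRingEnd ℂ) (∑ k ∈ Pos, b k * Complex.exp (Complex.I * k * t)) := by
      rw [hsplit, Finset.sum_union hdisj]
      congr 1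
      rw [map_sum]
      refine Finset.sum_nbij' (i := fun k : ℤ => -k) (j := fun k : ℤ => -k)
        ?_ ?_ ?_ ?_ ?_
      · intro k hk
        simp only [hPdef, hNdef, Finset.mem_Icc] at *
        omega
      · intro k hk
        simp only [hPdef, hNdef, Finset.mem_Icc] at *
        omega
      · intro k _; exact neg_neg k
      · intro k _; exact neg_neg k
      · intro k _
        rw [map_mul, hconj_b, conj_exp_int]
        simp
    have h1 : |g t| ≤ ‖∑ k ∈ s0, b k * Complex.exp (Complex.I * k * t)‖ := by
      rw [hgdef]
      simp only
      exact Complex.abs_re_le_norm _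
    calc |g t| ≤ ‖∑ k ∈ s0, b k * Complex.exp (Complex.I * k * t)‖ := h1
      _ ≤ ‖∑ k ∈ Pos, b k * Complex.exp (Complex.I * k * t)‖
          + ‖(starRingEnd ℂ) (∑ k ∈ Pos, b k * Complex.exp (Complex.I * k * t))‖ := by
            rw [hGsplit]; exact norm_add_le _ _
      _ = 2 * ‖∑ k ∈ Pos, b k * Complex.exp (Complex.I * k * t)‖ := by
            rw [RCLike.norm_conj]; ring
      _ = 2 * (c * ‖∑ k ∈ Pos, (ξ k.natAbs : ℂ) * Complex.exp (Complex.I * k * t)‖) := by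
            rw [hPt, norm_mul, norm_mul, hw, mul_one, Complex.norm_real,
              Real.norm_eq_abs, abs_of_pos hc0]
      _ ≤ 2 * (c * (5*q + 1)) := by
            have := hTbound t
            nlinarith [hTbound t, hc0.le]
      _ = 1 := by
            rw [hcdef]
            field_simp
            ring
  have hcont : ∀ (s : Finset ℤ) (u : ℤ → ℂ),
      Continuous (fun t : ℝ => ∑ k ∈ s, u k * Complex.exp (Complex.I * k * t)) := by
    intro s u
    apply continuous_finset_sum
    intro k _
    fun_prop
  refine ⟨?_, ?_, g, ?_, ?_, ?_, ?_, ?_⟩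
  · intro t
    simp only [expInt_periodic]
  · apply Continuous.intervalIntegrable
    exact Complex.continuous_re.comp (continuous_const.mul (hcont S _))
  · intro t
    simp only [hgdef, expInt_periodic]
  · apply Continuous.intervalIntegrable
    exact Complex.continuous_re.comp (hcont s0 _)
  · exact Filter.Eventually.of_forall hgbound
  · rw [hgc 0]
    simp [hs0def]
  · intro k hk
    rw [hgc k]
    simp only []
    rw [hfc k]
    by_cases hkS : k ∈ S
    · rw [if_pos (Finset.mem_erase.mpr ⟨hk, hkS⟩), if_pos hkS]
      have hψne : (ψ k.natAbs : ℂ) ≠ 0 := by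
        exact_mod_cast (hψ k.natAbs).ne'
      rw [hbdef, hadef, hedef]
      simp only
      field_simp
    · rw [if_neg (fun h => hkS (Finset.mem_of_mem_erase h)), if_neg hkS]
      simp
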